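/- For c ≠ 0 with c ≠ 1, define f_c : ℝ² → ℝ by f_c(x, y) = 0.05(y − x²)² + (1 − x)² + c if x ≥ c, and f_c(x, y) = (x/c)(1 − x)² + 0.05(y − x²)² − ((1 − c)²/c)(x − c) + c if x < c. Then for any fixed y ∈ ℝ, the function x ↦ ∂f_c/∂x (x, y) is not differentiable at x = c; in particular, the second partial derivative ∂²f_c/∂x² does not exist at any point (c, y), so f_c is not twice differentiable. -/

import Mathlib

open Set Filter

/-- For `c ≠ 0, 1`, the partial derivative `∂f_c/∂x` of the piecewise function `f_c`
is not differentiable (in `x`) at `x = c`, for any fixed `y`; hence `∂²f_c/∂x²` does not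
exist at any point `(c, y)` and `f_c` is not twice differentiable. -/
theorem fc_second_partial_not_exists (c : ℝ) (hc : c ≠ 0) (hc1 : c ≠ 1) (f : ℝ × ℝ → ℝ)
    (hf : ∀ x y : ℝ, f (x, y) =
      if c ≤ x then 0.05 * (y - x ^ 2) ^ 2 + (1 - x) ^ 2 + c
      else (x / c) * (1 - x) ^ 2 + 0.05 * (y - x ^ 2) ^ 2 - ((1 - c) ^ 2 / c) * (x - c) + c) :
    ∀ y : ℝ, ¬ DifferentiableAt ℝ
      (fun t : ℝ => fderiv ℝ f (t, y) (1, 0)) c := by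
  set h : ℝ → ℝ := fun x => if c ≤ x then (1 - x) ^ 2
    else (x / c) * (1 - x) ^ 2 - ((1 - c) ^ 2 / c) * (x - c) with hh
  set h' : ℝ → ℝ := fun x => if c ≤ x then -2 * (1 - x)
    else ((1 - x) ^ 2 - 2 * x * (1 - x) - (1 - c) ^ 2) / c with hh'
  have hfh : ∀ p : ℝ × ℝ, f p = 0.05 * (p.2 - p.1 ^ 2) ^ 2 + c + h p.1 := by
    rintro ⟨x, y⟩
    rw [hf x y]
    simp only [hh]
    split <;> ring
  -- h and h' are continuous
  have hcont : Continuous h := by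
    apply Continuous.if_le _ _ continuous_const continuous_id
    · rintro x rfl
      field_simp
      ring
    · fun_prop
    · fun_prop
  have hcont' : Continuous h' := by
    apply Continuous.if_le _ _ continuous_const continuous_id
    · rintro x rfl
      field_simp
      ring
    · fun_prop
    · fun_prop
  -- off the junction, h has derivative h'
  have hd_ne : ∀ x ≠ c, HasDerivAt h (h' x) x := by
    intro x hx
    rcases lt_or_gt_of_ne hx with hlt | hgt
    · -- x < c : left branch
      have hB : HasDerivAt (fun t : ℝ => (t / c) * (1 - t) ^ 2 - ((1 - c) ^ 2 / c) * (t - c))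
          ((1 / c) * (1 - x) ^ 2 + (x / c) * (2 * (1 - x) ^ 1 * (-1)) - (1 - c) ^ 2 / c * 1) x := by
        exact (((hasDerivAt_id x).div_const c).mul
          (((hasDerivAt_id x).const_sub 1).pow 2)).sub
          (((hasDerivAt_id x).sub_const c).const_mul ((1 - c) ^ 2 / c))
      have hEq : h =ᶠ[nhds x] fun t : ℝ => (t / c) * (1 - t) ^ 2 - ((1 - c) ^ 2 / c) * (t - c) := by
        filter_upwards [Iio_mem_nhds hlt] with t ht
        simp only [hh, if_neg (not_le.2 (mem_Iio.1 ht))]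
      have := hB.congr_of_eventuallyEq hEq
      refine this.congr_deriv ?_
      simp only [hh', if_neg (not_le.2 hlt)]
      field_simp
      ring
    · -- x > c : right branch
      have hB : HasDerivAt (fun t : ℝ => (1 - t) ^ 2) (2 * (1 - x) ^ 1 * (-1)) x :=
        ((hasDerivAt_id x).const_sub 1).pow 2
      have hEq : h =ᶠ[nhds x] fun t : ℝ => (1 - t) ^ 2 := by
        filter_upwards [Ioi_mem_nhds hgt] with t ht
        simp only [hh, if_pos (le_of_lt (mem_Ioi.1 ht))]
      have := hB.congr_of_eventuallyEq hEq
      refine this.congr_deriv ?_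
      simp only [hh', if_pos (le_of_lt hgt)]
      ring
  have hd : ∀ x, HasDerivAt h (h' x) x :=
    hasDerivAt_of_hasDerivAt_of_ne' hd_ne hcont.continuousAt hcont'.continuousAt
  intro y hdiff
  -- f is differentiable everywhere along the line
  have hfd : ∀ t : ℝ, DifferentiableAt ℝ f (t, y) := by
    intro t
    have hF : DifferentiableAt ℝ (fun p : ℝ × ℝ => 0.05 * (p.2 - p.1 ^ 2) ^ 2 + c + h p.1)
        (t, y) := by
      refine DifferentiableAt.add (DifferentiableAt.add ?_ (differentiableAt_const c)) ?_
      · exact (((differentiableAt_snd).sub ((differentiableAt_fst).pow 2)).pow 2).const_mul 0.05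
      · exact ((hd t).differentiableAt).comp (t, y) (by fun_prop : DifferentiableAt ℝ (Prod.fst : ℝ × ℝ → ℝ) (t, y))
    have : f = fun p : ℝ × ℝ => 0.05 * (p.2 - p.1 ^ 2) ^ 2 + c + h p.1 := funext hfh
    rw [this]
    exact hF
  -- compute the partial derivative
  have key : ∀ t : ℝ, fderiv ℝ f (t, y) (1, 0) = 0.05 * (2 * (y - t ^ 2) ^ 1 * (-(2 * t))) + h' t := by
    intro t
    have hγ : HasDerivAt (fun x : ℝ => ((x : ℝ), y)) ((1 : ℝ), (0 : ℝ)) t :=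
      (hasDerivAt_id t).prodMk (hasDerivAt_const t y)
    have h1 : HasDerivAt (fun x : ℝ => f (x, y)) (fderiv ℝ f (t, y) (1, 0)) t :=
      ((hfd t).hasFDerivAt).comp_hasDerivAt t hγ
    have hA : HasDerivAt (fun x : ℝ => 0.05 * (y - x ^ 2) ^ 2 + c)
        (0.05 * (2 * (y - t ^ 2) ^ 1 * (-(2 * t)))) t := by
      have h2 : HasDerivAt (fun x : ℝ => y - x ^ 2) (-(2 * t)) t := by
        simpa using (hasDerivAt_pow 2 t).const_sub y
      simpa using ((h2.pow 2).const_mul 0.05).add_const c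
    have h2 : HasDerivAt (fun x : ℝ => f (x, y))
        (0.05 * (2 * (y - t ^ 2) ^ 1 * (-(2 * t))) + h' t) t := by
      have hfun : (fun x : ℝ => f (x, y)) = fun x : ℝ => (0.05 * (y - x ^ 2) ^ 2 + c) + h x := by
        funext x
        rw [hfh (x, y)]
      rw [hfun]
      exact hA.add (hd t)
    exact h1.unique h2
  -- so the map in question equals a smooth function plus h'
  have hgeq : (fun t : ℝ => fderiv ℝ f (t, y) (1, 0))
      = fun t : ℝ => 0.05 * (2 * (y - t ^ 2) ^ 1 * (-(2 * t))) + h' t := funext key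
  rw [hgeq] at hdiff
  have hP : DifferentiableAt ℝ (fun t : ℝ => 0.05 * (2 * (y - t ^ 2) ^ 1 * (-(2 * t)))) c := by
    fun_prop
  have hh'diff : DifferentiableAt ℝ h' c := by
    have := hdiff.sub hP
    simpa [Pi.sub_def] using this
  -- derive contradiction from one-sided derivatives of h'
  have hder : HasDerivAt h' (deriv h' c) c := hh'diff.hasDerivAt
  -- right side
  have hrA : HasDerivWithinAt (fun x : ℝ => -2 * (1 - x)) (deriv h' c) (Ici c) c := by
    refine (hder.hasDerivWithinAt).congr ?_ ?_
    · intro t ht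
      simp only [hh', if_pos (mem_Ici.1 ht)]
    · simp only [hh', if_pos le_rfl]
  have hrA2 : HasDerivWithinAt (fun x : ℝ => -2 * (1 - x)) 2 (Ici c) c := by
    have : HasDerivAt (fun x : ℝ => -2 * (1 - x)) (-2 * -1) c :=
      ((hasDerivAt_id c).const_sub 1).const_mul (-2)
    have h2 : HasDerivAt (fun x : ℝ => -2 * (1 - x)) 2 c := by convert this using 1; norm_num
    exact h2.hasDerivWithinAt
  have hudr : UniqueDiffWithinAt ℝ (Ici c) c := uniqueDiffOn_Ici c c self_mem_Ici
  have hR : deriv h' c = 2 := by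
    rw [← hrA.derivWithin hudr, hrA2.derivWithin hudr]
  -- left side
  have hlA : HasDerivWithinAt (fun x : ℝ => ((1 - x) ^ 2 - 2 * x * (1 - x) - (1 - c) ^ 2) / c)
      (deriv h' c) (Iic c) c := by
    refine (hder.hasDerivWithinAt).congr ?_ ?_
    · intro t ht
      rcases eq_or_lt_of_le (mem_Iic.1 ht) with rfl | hlt
      · simp only [hh', if_pos le_rfl]
        field_simp
        ring
      · simp only [hh', if_neg (not_le.2 hlt)]
    · simp only [hh', if_pos le_rfl]
      field_simp
      ring
  have hlA2 : HasDerivWithinAt (fun x : ℝ => ((1 - x) ^ 2 - 2 * x * (1 - x) - (1 - c) ^ 2) / c)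
      ((6 * c - 4) / c) (Iic c) c := by
    have hnum : HasDerivAt (fun x : ℝ => (1 - x) ^ 2 - 2 * x * (1 - x) - (1 - c) ^ 2)
        ((2 * (1 - c) ^ 1 * (-1)) - (2 * 1 * (1 - c) + 2 * c * (-1))) c := by
      have h1 : HasDerivAt (fun x : ℝ => (1 - x) ^ 2) (2 * (1 - c) ^ 1 * (-1)) c :=
        ((hasDerivAt_id c).const_sub 1).pow 2
      have h2 : HasDerivAt (fun x : ℝ => 2 * x * (1 - x)) (2 * 1 * (1 - c) + 2 * c * (-1)) c := by
        have := (((hasDerivAt_id c).const_mul 2).mul ((hasDerivAt_id c).const_sub 1))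
        exact this
      exact (h1.sub h2).sub_const ((1 - c) ^ 2)
    have := (hnum.div_const c).hasDerivWithinAt (s := Iic c)
    refine this.congr_deriv ?_
    ring
  have hudl : UniqueDiffWithinAt ℝ (Iic c) c := uniqueDiffOn_Iic c c self_mem_Iic
  have hL : deriv h' c = (6 * c - 4) / c := by
    rw [← hlA.derivWithin hudl, hlA2.derivWithin hudl]
  rw [hR] at hL
  have : 2 * c = 6 * c - 4 := by field_simp at hL; linarith
  apply hc1
  linarith
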